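/- If G is a randomly k-dimensional graph with k ≥ 4, then G contains no two adjacent vertices that both have degree 2. -/

import Mathlib

open SimpleGraph

/-- `W` is a resolving set for `G`: distinct vertices have distinct
metric representations with respect to `W`. -/
def IsResolvingSet {V : Type*} (G : SimpleGraph V) (W : Finset V) : Prop :=
  ∀ u v : V, u ≠ v → ∃ w ∈ W, G.dist u w ≠ G.dist v w

/-- The metric dimension `β(G)`: minimum cardinality of a resolving set. -/
noncomputable def metricDim {V : Type*} [Fintype V] (G : SimpleGraph V) : ℕ :=
  sInf {k | ∃ W : Finset V, W.card = k ∧ IsResolvingSet G W}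

/-- A (metric) basis of `G`: a resolving set of minimum cardinality. -/
def IsMetricBasis {V : Type*} [Fintype V] (G : SimpleGraph V) (B : Finset V) : Prop :=
  IsResolvingSet G B ∧ B.card = metricDim G

/-- The resolving number `res(G)`: the minimum `k` such that every `k`-set of
vertices is a resolving set. -/
noncomputable def resolvingNumber {V : Type*} [Fintype V] (G : SimpleGraph V) : ℕ :=
  sInf {k | ∀ W : Finset V, W.card = k → IsResolvingSet G W}

/-- The basis number `bas(G)`: the maximum `r` such that every `r`-set of
vertices is contained in some basis. -/
noncomputable def basisNumber {V : Type*} [Fintype V] (G : SimpleGraph V) : ℕ :=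
  sSup {r | r ≤ Fintype.card V ∧
    ∀ S : Finset V, S.card = r → ∃ B : Finset V, S ⊆ B ∧ IsMetricBasis G B}

/-- `G` is randomly `k`-dimensional: `β(G) = k` and every `k`-set of vertices
is a basis of `G`. -/
def RandomlyDimensional {V : Type*} [Fintype V] (G : SimpleGraph V) (k : ℕ) : Prop :=
  metricDim G = k ∧ ∀ W : Finset V, W.card = k → IsMetricBasis G W


lemma choose_mono_half (n : ℕ) : ∀ (a b : ℕ), a ≤ b → b ≤ n / 2 → n.choose a ≤ n.choose b := by
  intro a b
  induction b with
  | zero =>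
    intro hab _
    have : a = 0 := by omega
    subst this; rfl
  | succ m ih =>
    intro hab hb
    rcases Nat.lt_or_ge a (m+1) with hlt | hge
    · exact (ih (by omega) (by omega)).trans (Nat.choose_le_succ_of_lt_half_left (by omega))
    · have : a = m + 1 := by omega
      subst this; rfl

lemma choose_two_lt (n j : ℕ) (h3 : 3 ≤ j) (hj : j + 3 ≤ n) :
    n.choose 2 < n.choose j := by
  have h6 : 6 ≤ n := by omega
  have hlt : n.choose 2 < n.choose 3 := by
    have heq := Nat.choose_succ_right_eq n 2
    have hpos : 0 < n.choose 2 := Nat.choose_pos (by omega)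
    have h4 : 4 ≤ n - 2 := by omega
    have : n.choose 2 * 3 < n.choose 3 * 3 := by
      calc n.choose 2 * 3 < n.choose 2 * 4 := by omega
      _ ≤ n.choose 2 * (n - 2) := Nat.mul_le_mul_left _ h4
      _ = n.choose 3 * 3 := heq.symm
    exact Nat.lt_of_mul_lt_mul_right this
  rcases le_or_gt j (n/2) with hhalf | hhalf
  · exact hlt.trans_le (choose_mono_half n 3 j h3 hhalf)
  · have h1 : 3 ≤ n - j := by omega
    have h2 : n - j ≤ n / 2 := by omega
    calc n.choose 2 < n.choose 3 := hlt
      _ ≤ n.choose (n - j) := choose_mono_half n 3 (n - j) h1 h2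
      _ = n.choose j := Nat.choose_symm (by omega)

theorem randomlyDimensional_no_adjacent_degree_two {V : Type*} [Fintype V] (G : SimpleGraph V)
    [DecidableRel G.Adj] (hG : G.Connected) (k : ℕ) (hk : 4 ≤ k)
    (h : RandomlyDimensional G k) :
    ¬ ∃ u v : V, G.Adj u v ∧ G.degree u = 2 ∧ G.degree v = 2 := by
  classical
  rintro ⟨u, v, hadj, hdu, hdv⟩
  obtain ⟨hdim, hbas⟩ := h
  have hres : ∀ W : Finset V, W.card = k → IsResolvingSet G W := fun W hW => (hbas W hW).1
  have hdistne : ∀ x y : V, x ≠ y → G.dist x y ≠ 0 := fun x y hxy h0 =>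
    hxy (hG.dist_eq_zero_iff.mp h0)
  have hnores : ∀ W : Finset V, W.card = k - 1 → ¬ IsResolvingSet G W := by
    intro W hW hWres
    have : metricDim G ≤ k - 1 := Nat.sInf_le ⟨W, hW, hWres⟩
    omega
  set n := Fintype.card V with hn
  have hn1 : k + 1 ≤ n := by
    have hmem : n - 1 ∈ {m | ∃ W : Finset V, W.card = m ∧ IsResolvingSet G W} := by
      refine ⟨Finset.univ.erase u, ?_, ?_⟩
      · rw [Finset.card_erase_of_mem (Finset.mem_univ u), Finset.card_univ]
      · intro x y hxy
        by_cases hxu : x = u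
        · subst hxu
          refine ⟨y, Finset.mem_erase.mpr ⟨Ne.symm hxy, Finset.mem_univ y⟩, ?_⟩
          rw [SimpleGraph.dist_self]
          exact fun hc => hdistne x y hxy hc
        · refine ⟨x, Finset.mem_erase.mpr ⟨hxu, Finset.mem_univ x⟩, ?_⟩
          rw [SimpleGraph.dist_self]
          exact fun hc => hdistne y x (Ne.symm hxy) hc.symm
    have h1 : metricDim G ≤ n - 1 := Nat.sInf_le hmem
    have h2 : 1 ≤ n := Fintype.card_pos_iff.mpr ⟨u⟩
    omega
  rcases eq_or_lt_of_le hn1 with hkn | hkn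
  · -- n = k + 1 : show G is complete, contradicting degree u = 2
    have hpq : ∀ p q : V, p ≠ q → ∀ w : V, w ≠ p → w ≠ q → G.dist p w = G.dist q w := by
      intro p q hpqne w hwp hwq
      set W := (Finset.univ.erase p).erase q with hWdef
      have hqW : q ∈ Finset.univ.erase p := Finset.mem_erase.mpr ⟨hpqne.symm, Finset.mem_univ q⟩
      have hWcard : W.card = k - 1 := by
        rw [hWdef, Finset.card_erase_of_mem hqW,
          Finset.card_erase_of_mem (Finset.mem_univ p), Finset.card_univ]
        omega
      have hnr := hnores W hWcard
      rw [IsResolvingSet] at hnr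
      push_neg at hnr
      obtain ⟨x, y, hxy, hxyW⟩ := hnr
      have hmemW : ∀ z : V, z ≠ p → z ≠ q → z ∈ W := fun z hzp hzq =>
        Finset.mem_erase.mpr ⟨hzq, Finset.mem_erase.mpr ⟨hzp, Finset.mem_univ z⟩⟩
      have hxpq : x = p ∨ x = q := by
        by_contra hc
        push_neg at hc
        have hc2 := hxyW x (hmemW x hc.1 hc.2)
        rw [SimpleGraph.dist_self] at hc2
        exact hdistne y x hxy.symm hc2.symm
      have hypq : y = p ∨ y = q := by
        by_contra hc
        push_neg at hc
        have hc2 := hxyW y (hmemW y hc.1 hc.2)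
        rw [SimpleGraph.dist_self] at hc2
        exact hdistne x y hxy hc2
      have heq := hxyW w (hmemW w hwp hwq)
      rcases hxpq with hx | hx <;> rcases hypq with hy | hy <;> subst hx <;> subst hy
      · exact absurd rfl hxy
      · exact heq
      · exact heq.symm
      · exact absurd rfl hxy
    have hadjall : ∀ x : V, x ≠ u → G.Adj u x := by
      intro x hxu
      have h1 : G.dist x u = 1 := by
        by_cases hxv : x = v
        · subst hxv
          rw [SimpleGraph.dist_comm, SimpleGraph.dist_eq_one_iff_adj]
          exact hadj
        · have h2 := hpq x v (fun hc => hxv hc) u (Ne.symm hxu) hadj.ne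
          rw [h2, SimpleGraph.dist_comm, SimpleGraph.dist_eq_one_iff_adj]
          exact hadj
      rw [← SimpleGraph.dist_eq_one_iff_adj, SimpleGraph.dist_comm]
      exact h1
    have hsub : Finset.univ.erase u ⊆ G.neighborFinset u := by
      intro x hx
      rw [SimpleGraph.mem_neighborFinset]
      exact hadjall x (Finset.mem_erase.mp hx).1
    have hge := Finset.card_le_card hsub
    rw [Finset.card_erase_of_mem (Finset.mem_univ u), Finset.card_univ,
      SimpleGraph.card_neighborFinset_eq_degree, hdu] at hge
    omega
  · -- n ≥ k + 2 : counting argument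
    set F : V → V → Finset V :=
      fun x y => Finset.univ.filter (fun w => G.dist x w = G.dist y w) with hF
    have hFsymm : ∀ x y : V, F x y = F y x := by
      intro x y
      simp only [hF]
      ext w
      simp only [Finset.mem_filter, Finset.mem_univ, true_and]
      exact eq_comm
    have hFcard : ∀ x y : V, x ≠ y → (F x y).card ≤ k - 1 := by
      intro x y hxy
      by_contra hc
      have hkle : k ≤ (F x y).card := by omega
      obtain ⟨T, hT, hTcard⟩ := Finset.exists_subset_card_eq hkle
      obtain ⟨w, hwT, hwne⟩ := hres T hTcard x y hxy
      exact hwne ((Finset.mem_filter.mp (hT hwT)).2)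
    have hSF : ∀ S : Finset V, ∃ p : V × V,
        S.card = k - 1 → (p.1 ≠ p.2 ∧ S = F p.1 p.2) := by
      intro S
      by_cases hS : S.card = k - 1
      · have hnr := hnores S hS
        rw [IsResolvingSet] at hnr
        push_neg at hnr
        obtain ⟨x, y, hxy, hxyS⟩ := hnr
        refine ⟨(x, y), fun _ => ⟨hxy, ?_⟩⟩
        have hsub : S ⊆ F x y := fun w hw =>
          Finset.mem_filter.mpr ⟨Finset.mem_univ w, hxyS w hw⟩
        exact Finset.eq_of_subset_of_card_le hsub (by rw [hS]; exact hFcard x y hxy)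
      · exact ⟨(u, u), fun hc => absurd hc hS⟩
    choose pf hpf using hSF
    have hmain : (Finset.powersetCard (k-1) (Finset.univ : Finset V)).card ≤
        (Finset.powersetCard 2 (Finset.univ : Finset V)).card := by
      apply Finset.card_le_card_of_injOn (fun S => {(pf S).1, (pf S).2})
      · intro S hSmem
        rw [Finset.mem_coe, Finset.mem_powersetCard] at hSmem
        obtain ⟨hne, _⟩ := hpf S hSmem.2
        rw [Finset.mem_coe, Finset.mem_powersetCard]
        exact ⟨Finset.subset_univ _, Finset.card_pair hne⟩
      · intro S hS S' hS' hff
        rw [Finset.mem_coe, Finset.mem_powersetCard] at hS hS'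
        obtain ⟨hne, hSeq⟩ := hpf S hS.2
        obtain ⟨hne', hSeq'⟩ := hpf S' hS'.2
        simp only at hff
        have h1 : (pf S).1 = (pf S').1 ∨ (pf S).1 = (pf S').2 := by
          have : (pf S).1 ∈ ({(pf S').1, (pf S').2} : Finset V) := by
            rw [← hff]; exact Finset.mem_insert_self _ _
          simpa using this
        have h2 : (pf S).2 = (pf S').1 ∨ (pf S).2 = (pf S').2 := by
          have : (pf S).2 ∈ ({(pf S').1, (pf S').2} : Finset V) := by
            rw [← hff]
            exact Finset.mem_insert_of_mem (Finset.mem_singleton_self _)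
          simpa using this
        rcases h1 with h1 | h1 <;> rcases h2 with h2 | h2
        · exact absurd (h1.trans h2.symm) hne
        · rw [hSeq, hSeq', h1, h2]
        · rw [hSeq, hSeq', h1, h2, hFsymm]
        · exact absurd (h1.trans h2.symm) hne
    rw [Finset.card_powersetCard, Finset.card_powersetCard, Finset.card_univ, ← hn] at hmain
    have := choose_two_lt n (k-1) (by omega) (by omega)
    omega
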